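/- There is no pair of C³ planar curves Γ_0, Γ_1 (parametrized by arclength, with C¹ radius of curvature ρ and chord-tangent angles α_0, α_1 ∈ (0,π)) for which the identity ρ(s_0) sin α_0 + ρ(s_1) sin α_1 = 2 l(s_0,s_1) holds for all s_0 ∈ Γ_0, s_1 ∈ Γ_1 on open intervals. -/

import Mathlib

open scoped RealInnerProductSpace
open Set

noncomputable def rot (v : EuclideanSpace ℝ (Fin 2)) : EuclideanSpace ℝ (Fin 2) :=
  WithLp.toLp 2 ![-(v 1), v 0]

namespace NB

local notation "E2" => EuclideanSpace ℝ (Fin 2)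

lemma rot_apply0 (v : E2) : rot v 0 = -(v 1) := rfl
lemma rot_apply1 (v : E2) : rot v 1 = v 0 := rfl

lemma inner2 (v w : E2) : ⟪v, w⟫ = v 0 * w 0 + v 1 * w 1 := by
  simp [PiLp.inner_apply, Fin.sum_univ_two, RCLike.inner_apply, conj_trivial, mul_comm]

lemma rotL : IsLinearMap ℝ rot := by
  constructor
  · intro x y; ext i; fin_cases i <;>
      simp [rot, PiLp.add_apply, add_comm]
  · intro c x; ext i; fin_cases i <;>
      simp [rot, PiLp.smul_apply, smul_eq_mul, mul_comm]

noncomputable def rotCLM : E2 →L[ℝ] E2 :=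
  LinearMap.toContinuousLinearMap (IsLinearMap.mk' rot rotL)

lemma rotCLM_apply (v : E2) : rotCLM v = rot v := rfl

lemma hasDerivAt_rot {f : ℝ → E2} {f' : E2} {x : ℝ} (hf : HasDerivAt f f' x) :
    HasDerivAt (fun t => rot (f t)) (rot f') x := by
  exact rotCLM.hasFDerivAt.comp_hasDerivAt x hf

lemma decomp {T : E2} (hT : ⟪T, T⟫ = 1) (v : E2) :
    v = ⟪T, v⟫ • T + ⟪rot T, v⟫ • rot T := by
  rw [inner2] at hT
  ext i; fin_cases i <;>
    simp only [Fin.isValue, Fin.zero_eta, Fin.mk_one, PiLp.add_apply, PiLp.smul_apply,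
      smul_eq_mul, inner2, rot_apply0, rot_apply1, Matrix.cons_val_zero, Matrix.cons_val_one, Matrix.head_cons]
  · linear_combination (-(v 0)) * hT
  · linear_combination (-(v 1)) * hT

lemma pythag {T : E2} (hT : ⟪T, T⟫ = 1) (v : E2) :
    ⟪T, v⟫ ^ 2 + ⟪rot T, v⟫ ^ 2 = ⟪v, v⟫ := by
  rw [inner2] at hT
  simp only [inner2, rot_apply0, rot_apply1]
  nlinarith [hT]

lemma inner_rot_self (v : E2) : ⟪rot v, v⟫ = 0 := by
  simp only [inner2, rot_apply0, rot_apply1]; ring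

lemma rot_rot (v : E2) : rot (rot v) = -v := by
  ext i; fin_cases i <;> simp [rot_apply0, rot_apply1, PiLp.neg_apply]

lemma inner_rot_rot (v w : E2) : ⟪rot v, rot w⟫ = ⟪v, w⟫ := by
  simp only [inner2, rot_apply0, rot_apply1]; ring

lemma inner_rot_left (v w : E2) : ⟪rot v, w⟫ = -⟪v, rot w⟫ := by
  simp only [inner2, rot_apply0, rot_apply1]; ring

end NB

namespace NB2

local notation "E2" => EuclideanSpace ℝ (Fin 2)

/-- Derivative of the norm of a nonvanishing differentiable curve. -/
lemma hasDerivAt_norm {w : ℝ → E2} {w' : E2} {t : ℝ} (h : HasDerivAt w w' t)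
    (h0 : w t ≠ 0) :
    HasDerivAt (fun s => ‖w s‖) (⟪w', ‖w t‖⁻¹ • w t⟫) t := by
  have hq : HasDerivAt (fun s => ⟪w s, w s⟫) (⟪w t, w'⟫ + ⟪w', w t⟫) t := h.inner ℝ h
  have hq0 : ⟪w t, w t⟫ ≠ (0:ℝ) := inner_self_ne_zero.2 h0
  have h2 := hq.sqrt hq0
  have hfun : (fun s => Real.sqrt ⟪w s, w s⟫) = fun s => ‖w s‖ := by
    funext s; rw [real_inner_self_eq_norm_mul_norm, Real.sqrt_mul_self (norm_nonneg _)]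
  rw [hfun] at h2
  convert h2 using 1
  rw [real_inner_smul_right, real_inner_comm (w t) w']
  have hn : ‖w t‖ ≠ 0 := norm_ne_zero_iff.2 h0
  rw [real_inner_self_eq_norm_mul_norm, Real.sqrt_mul_self (norm_nonneg _)]
  field_simp
  ring

/-- Derivative of the unit direction of a nonvanishing differentiable curve. -/
lemma hasDerivAt_unit {w : ℝ → E2} {w' : E2} {t : ℝ} (h : HasDerivAt w w' t)
    (h0 : w t ≠ 0) :
    HasDerivAt (fun s => ‖w s‖⁻¹ • w s)
      (‖w t‖⁻¹ • (w' - ⟪w', ‖w t‖⁻¹ • w t⟫ • (‖w t‖⁻¹ • w t))) t := by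
  have hn : ‖w t‖ ≠ 0 := norm_ne_zero_iff.2 h0
  have hinv : HasDerivAt (fun s => ‖w s‖⁻¹) (-⟪w', ‖w t‖⁻¹ • w t⟫ / ‖w t‖ ^ 2) t :=
    (hasDerivAt_norm h h0).inv hn
  have h2 := hinv.smul h
  refine h2.congr_deriv ?_
  symm
  rw [smul_sub, smul_smul, smul_smul, sub_eq_add_neg, ← neg_smul]
  congr 1
  rw [real_inner_smul_right]
  field_simp

lemma sign_const {P : Set (ℝ × ℝ)} (hP : IsPreconnected P) {f : ℝ × ℝ → ℝ}
    (hf : ContinuousOn f P) (hne : ∀ p ∈ P, f p ≠ 0) :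
    (∀ p ∈ P, 0 < f p) ∨ (∀ p ∈ P, f p < 0) := by
  by_contra hc
  push_neg at hc
  obtain ⟨⟨p, hp, hfp⟩, ⟨q, hq, hfq⟩⟩ := hc
  have hfp' : f p < 0 := lt_of_le_of_ne hfp (hne p hp)
  have hfq' : 0 < f q := lt_of_le_of_ne hfq (Ne.symm (hne q hq))
  have h0 : (0:ℝ) ∈ Icc (f p) (f q) := ⟨le_of_lt hfp', le_of_lt hfq'⟩
  obtain ⟨r, hr, hfr⟩ := hP.intermediate_value hp hq hf h0
  exact hne r hr hfr

lemma deriv_eq_on_Ioo {f g : ℝ → ℝ} {a b x : ℝ} (hx : x ∈ Ioo a b)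
    (h : ∀ t ∈ Ioo a b, f t = g t) {f' g' : ℝ}
    (hf : HasDerivAt f f' x) (hg : HasDerivAt g g' x) : f' = g' :=
  hf.unique (hg.congr_of_eventuallyEq
    (Filter.eventuallyEq_of_mem (isOpen_Ioo.mem_nhds hx) h))

end NB2

open NB NB2

theorem no_billiard_identity (a0 b0 a1 b1 : ℝ) (h01 : a0 < b0) (h11 : a1 < b1)
    (γ0 γ1 : ℝ → EuclideanSpace ℝ (Fin 2)) (κ0 κ1 : ℝ → ℝ)
    (hγ0 : ContDiffOn ℝ 3 γ0 (Ioo a0 b0)) (hγ1 : ContDiffOn ℝ 3 γ1 (Ioo a1 b1))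
    (hunit0 : ∀ s ∈ Ioo a0 b0, ‖deriv γ0 s‖ = 1)
    (hunit1 : ∀ s ∈ Ioo a1 b1, ‖deriv γ1 s‖ = 1)
    (hκ0 : ∀ s ∈ Ioo a0 b0, κ0 s = ⟪deriv (deriv γ0) s, rot (deriv γ0 s)⟫)
    (hκ1 : ∀ s ∈ Ioo a1 b1, κ1 s = ⟪deriv (deriv γ1) s, rot (deriv γ1 s)⟫)
    (hκ0ne : ∀ s ∈ Ioo a0 b0, κ0 s ≠ 0) (hκ1ne : ∀ s ∈ Ioo a1 b1, κ1 s ≠ 0)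
    (hρ0 : ContDiffOn ℝ 1 (fun s => (κ0 s)⁻¹) (Ioo a0 b0))
    (hρ1 : ContDiffOn ℝ 1 (fun s => (κ1 s)⁻¹) (Ioo a1 b1))
    (hne : ∀ s0 ∈ Ioo a0 b0, ∀ s1 ∈ Ioo a1 b1, γ0 s0 ≠ γ1 s1)
    (hang0 : ∀ s0 ∈ Ioo a0 b0, ∀ s1 ∈ Ioo a1 b1,
      |⟪deriv γ0 s0, ‖γ1 s1 - γ0 s0‖⁻¹ • (γ1 s1 - γ0 s0)⟫| < 1)
    (hang1 : ∀ s0 ∈ Ioo a0 b0, ∀ s1 ∈ Ioo a1 b1,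
      |⟪deriv γ1 s1, ‖γ1 s1 - γ0 s0‖⁻¹ • (γ1 s1 - γ0 s0)⟫| < 1)
    (hiden : ∀ s0 ∈ Ioo a0 b0, ∀ s1 ∈ Ioo a1 b1,
      (κ0 s0)⁻¹ *
          Real.sqrt (1 - ⟪deriv γ0 s0, ‖γ1 s1 - γ0 s0‖⁻¹ • (γ1 s1 - γ0 s0)⟫ ^ 2) +
        (κ1 s1)⁻¹ *
          Real.sqrt (1 - ⟪deriv γ1 s1, ‖γ1 s1 - γ0 s0‖⁻¹ • (γ1 s1 - γ0 s0)⟫ ^ 2) =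
      2 * ‖γ1 s1 - γ0 s0‖) :
    False := by
  -- notation
  set I0 := Ioo a0 b0 with hI0def
  set I1 := Ioo a1 b1 with hI1def
  -- basic derivative facts for γ0
  have hγ0d : ∀ x ∈ I0, HasDerivAt γ0 (deriv γ0 x) x := fun x hx =>
    ((hγ0.differentiableOn (by norm_num)).differentiableAt
      (isOpen_Ioo.mem_nhds hx)).hasDerivAt
  have hγ1d : ∀ y ∈ I1, HasDerivAt γ1 (deriv γ1 y) y := fun y hy =>
    ((hγ1.differentiableOn (by norm_num)).differentiableAt
      (isOpen_Ioo.mem_nhds hy)).hasDerivAt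
  have hT0c2 : ContDiffOn ℝ 2 (deriv γ0) I0 :=
    hγ0.deriv_of_isOpen isOpen_Ioo (by norm_num)
  have hT1c2 : ContDiffOn ℝ 2 (deriv γ1) I1 :=
    hγ1.deriv_of_isOpen isOpen_Ioo (by norm_num)
  have hT0unit : ∀ x ∈ I0, ⟪deriv γ0 x, deriv γ0 x⟫ = (1:ℝ) := by
    intro x hx
    rw [real_inner_self_eq_norm_mul_norm, hunit0 x hx]; norm_num
  have hT1unit : ∀ y ∈ I1, ⟪deriv γ1 y, deriv γ1 y⟫ = (1:ℝ) := by
    intro y hy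
    rw [real_inner_self_eq_norm_mul_norm, hunit1 y hy]; norm_num
  -- the Frenet equation T' = κ • rot T
  have hT0d : ∀ x ∈ I0, HasDerivAt (deriv γ0) (κ0 x • rot (deriv γ0 x)) x := by
    intro x hx
    have hD : HasDerivAt (deriv γ0) (deriv (deriv γ0) x) x :=
      ((hT0c2.differentiableOn (by norm_num)).differentiableAt
        (isOpen_Ioo.mem_nhds hx)).hasDerivAt
    set D := deriv (deriv γ0) x with hDdef
    have horth : ⟪deriv γ0 x, D⟫ = (0:ℝ) := by
      have hf : HasDerivAt (fun t => ⟪deriv γ0 t, deriv γ0 t⟫)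
          (⟪deriv γ0 x, D⟫ + ⟪D, deriv γ0 x⟫) x := hD.inner ℝ hD
      have hconst : HasDerivAt (fun t => ⟪deriv γ0 t, deriv γ0 t⟫) (0:ℝ) x :=
        (hasDerivAt_const x (1:ℝ)).congr_of_eventuallyEq
          (Filter.eventuallyEq_of_mem (isOpen_Ioo.mem_nhds hx) (fun t ht => hT0unit t ht))
      have := hf.unique hconst
      rw [real_inner_comm D (deriv γ0 x)] at this
      rw [real_inner_comm]
      linarith
    have hdec := decomp (hT0unit x hx) D
    have h2 : D = κ0 x • rot (deriv γ0 x) := by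
      conv_lhs => rw [hdec]
      rw [horth]
      simp only [zero_smul, zero_add]
      congr 1
      rw [hκ0 x hx, real_inner_comm]
    exact h2 ▸ hD
  have hT1d : ∀ y ∈ I1, HasDerivAt (deriv γ1) (κ1 y • rot (deriv γ1 y)) y := by
    intro y hy
    have hD : HasDerivAt (deriv γ1) (deriv (deriv γ1) y) y :=
      ((hT1c2.differentiableOn (by norm_num)).differentiableAt
        (isOpen_Ioo.mem_nhds hy)).hasDerivAt
    set D := deriv (deriv γ1) y with hDdef
    have horth : ⟪deriv γ1 y, D⟫ = (0:ℝ) := by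
      have hf : HasDerivAt (fun t => ⟪deriv γ1 t, deriv γ1 t⟫)
          (⟪deriv γ1 y, D⟫ + ⟪D, deriv γ1 y⟫) y := hD.inner ℝ hD
      have hconst : HasDerivAt (fun t => ⟪deriv γ1 t, deriv γ1 t⟫) (0:ℝ) y :=
        (hasDerivAt_const y (1:ℝ)).congr_of_eventuallyEq
          (Filter.eventuallyEq_of_mem (isOpen_Ioo.mem_nhds hy) (fun t ht => hT1unit t ht))
      have := hf.unique hconst
      rw [real_inner_comm D (deriv γ1 y)] at this
      rw [real_inner_comm]
      linarith
    have hdec := decomp (hT1unit y hy) D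
    have h2 : D = κ1 y • rot (deriv γ1 y) := by
      conv_lhs => rw [hdec]
      rw [horth]
      simp only [zero_smul, zero_add]
      congr 1
      rw [hκ1 y hy, real_inner_comm]
    exact h2 ▸ hD
  -- chord quantities
  set T0 : ℝ → EuclideanSpace ℝ (Fin 2) := deriv γ0 with hT0f
  set T1 : ℝ → EuclideanSpace ℝ (Fin 2) := deriv γ1 with hT1f
  set L : ℝ → ℝ → ℝ := fun x y => ‖γ1 y - γ0 x‖ with hLf
  set U : ℝ → ℝ → EuclideanSpace ℝ (Fin 2) := fun x y => (L x y)⁻¹ • (γ1 y - γ0 x) with hUf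
  set c0f : ℝ → ℝ → ℝ := fun x y => ⟪T0 x, U x y⟫ with hc0f
  set m0f : ℝ → ℝ → ℝ := fun x y => ⟪rot (T0 x), U x y⟫ with hm0f
  set c1f : ℝ → ℝ → ℝ := fun x y => ⟪T1 y, U x y⟫ with hc1f
  set m1f : ℝ → ℝ → ℝ := fun x y => ⟪rot (T1 y), U x y⟫ with hm1f
  set Sf : ℝ → ℝ → ℝ := fun x y => ⟪rot (T0 x), T1 y⟫ with hSf
  set Cf : ℝ → ℝ → ℝ := fun x y => ⟪T0 x, T1 y⟫ with hCf
  set R0 : ℝ → ℝ := deriv (fun s => (κ0 s)⁻¹) with hR0f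
  set R1 : ℝ → ℝ := deriv (fun s => (κ1 s)⁻¹) with hR1f
  have hwne : ∀ x ∈ I0, ∀ y ∈ I1, γ1 y - γ0 x ≠ 0 := fun x hx y hy =>
    sub_ne_zero.2 (Ne.symm (hne x hx y hy))
  have hLpos : ∀ x ∈ I0, ∀ y ∈ I1, 0 < L x y := fun x hx y hy =>
    norm_pos_iff.2 (hwne x hx y hy)
  have hLne : ∀ x ∈ I0, ∀ y ∈ I1, L x y ≠ 0 := fun x hx y hy => (hLpos x hx y hy).ne'
  have hUunit : ∀ x ∈ I0, ∀ y ∈ I1, ⟪U x y, U x y⟫ = (1:ℝ) := by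
    intro x hx y hy
    rw [hUf]
    simp only [real_inner_smul_left, real_inner_smul_right]
    rw [real_inner_self_eq_norm_mul_norm]
    have := hLne x hx y hy
    rw [hLf] at this ⊢
    field_simp
  -- right (y)-derivatives
  have hwdR : ∀ x ∈ I0, ∀ y ∈ I1, HasDerivAt (fun t => γ1 t - γ0 x) (T1 y) y :=
    fun x hx y hy => (hγ1d y hy).sub_const (γ0 x)
  have hLR : ∀ x ∈ I0, ∀ y ∈ I1, HasDerivAt (fun t => L x t) (c1f x y) y :=
    fun x hx y hy => hasDerivAt_norm (hwdR x hx y hy) (hwne x hx y hy)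
  have hUR : ∀ x ∈ I0, ∀ y ∈ I1,
      HasDerivAt (fun t => U x t) ((L x y)⁻¹ • (T1 y - c1f x y • U x y)) y :=
    fun x hx y hy => hasDerivAt_unit (hwdR x hx y hy) (hwne x hx y hy)
  have hc0R : ∀ x ∈ I0, ∀ y ∈ I1, HasDerivAt (fun t => c0f x t)
      ((Cf x y - c1f x y * c0f x y) * (L x y)⁻¹) y := by
    intro x hx y hy
    have h := (hasDerivAt_const y (T0 x)).inner ℝ (hUR x hx y hy)
    refine h.congr_deriv ?_
    symm
    simp only [inner_zero_left, add_zero, real_inner_smul_right, inner_sub_right]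
    rw [hCf, hc0f, hc1f]
    ring
  have hm0R : ∀ x ∈ I0, ∀ y ∈ I1, HasDerivAt (fun t => m0f x t)
      ((Sf x y - c1f x y * m0f x y) * (L x y)⁻¹) y := by
    intro x hx y hy
    have h := (hasDerivAt_const y (rot (T0 x))).inner ℝ (hUR x hx y hy)
    refine h.congr_deriv ?_
    symm
    simp only [inner_zero_left, add_zero, real_inner_smul_right, inner_sub_right]
    rw [hSf, hm0f, hc1f]
    ring
  have hc1R : ∀ x ∈ I0, ∀ y ∈ I1, HasDerivAt (fun t => c1f x t)
      (κ1 y * m1f x y + (1 - c1f x y ^ 2) * (L x y)⁻¹) y := by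
    intro x hx y hy
    have h := (hT1d y hy).inner ℝ (hUR x hx y hy)
    refine h.congr_deriv ?_
    symm
    simp only [real_inner_smul_right, inner_sub_right, real_inner_smul_left]
    rw [hT1unit y hy]
    simp only [hm1f, hc1f]
    ring
  have hm1R : ∀ x ∈ I0, ∀ y ∈ I1, HasDerivAt (fun t => m1f x t)
      (-(κ1 y * c1f x y) - c1f x y * m1f x y * (L x y)⁻¹) y := by
    intro x hx y hy
    have h := (hasDerivAt_rot (hT1d y hy)).inner ℝ (hUR x hx y hy)
    refine h.congr_deriv ?_
    symm
    rw [rotL.2, rot_rot]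
    simp only [real_inner_smul_right, inner_sub_right, real_inner_smul_left,
      inner_neg_left]
    rw [inner_rot_self (T1 y)]
    simp only [hm1f, hc1f]
    ring
  have hSR : ∀ x ∈ I0, ∀ y ∈ I1, HasDerivAt (fun t => Sf x t) (κ1 y * Cf x y) y := by
    intro x hx y hy
    have h := (hasDerivAt_const y (rot (T0 x))).inner ℝ (hT1d y hy)
    refine h.congr_deriv ?_
    symm
    simp only [inner_zero_left, add_zero, real_inner_smul_right, inner_rot_rot]
    rfl
  have hCR : ∀ x ∈ I0, ∀ y ∈ I1, HasDerivAt (fun t => Cf x t) (-(κ1 y * Sf x y)) y := by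
    intro x hx y hy
    have h := (hasDerivAt_const y (T0 x)).inner ℝ (hT1d y hy)
    refine h.congr_deriv ?_
    symm
    simp only [inner_zero_left, add_zero, real_inner_smul_right]
    rw [hSf]
    have : ⟪T0 x, rot (T1 y)⟫ = -⟪rot (T0 x), T1 y⟫ := by
      rw [inner_rot_left]; ring
    rw [this]
    ring
  -- left (x)-derivatives
  have hwdL : ∀ x ∈ I0, ∀ y ∈ I1, HasDerivAt (fun t => γ1 y - γ0 t) (-(T0 x)) x :=
    fun x hx y hy => (hγ0d x hx).const_sub (γ1 y)
  have hLL : ∀ x ∈ I0, ∀ y ∈ I1, HasDerivAt (fun t => L t y) (-(c0f x y)) x := by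
    intro x hx y hy
    have h := hasDerivAt_norm (hwdL x hx y hy) (hwne x hx y hy)
    convert h using 1
    simp only [inner_neg_left, hc0f]
    rfl
  have hUL : ∀ x ∈ I0, ∀ y ∈ I1,
      HasDerivAt (fun t => U t y) ((L x y)⁻¹ • (c0f x y • U x y - T0 x)) x := by
    intro x hx y hy
    have h := hasDerivAt_unit (hwdL x hx y hy) (hwne x hx y hy)
    convert h using 2
    simp only [inner_neg_left, hc0f, neg_smul, sub_neg_eq_add]
    abel
  have hc0L : ∀ x ∈ I0, ∀ y ∈ I1, HasDerivAt (fun t => c0f t y)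
      (κ0 x * m0f x y + (c0f x y ^ 2 - 1) * (L x y)⁻¹) x := by
    intro x hx y hy
    have h := (hT0d x hx).inner ℝ (hUL x hx y hy)
    refine h.congr_deriv ?_
    symm
    simp only [real_inner_smul_right, inner_sub_right, real_inner_smul_left]
    rw [hT0unit x hx]
    simp only [hc0f, hm0f]
    ring
  have hm0L : ∀ x ∈ I0, ∀ y ∈ I1, HasDerivAt (fun t => m0f t y)
      (-(κ0 x * c0f x y) + c0f x y * m0f x y * (L x y)⁻¹) x := by
    intro x hx y hy
    have h := (hasDerivAt_rot (hT0d x hx)).inner ℝ (hUL x hx y hy)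
    refine h.congr_deriv ?_
    symm
    rw [rotL.2, rot_rot]
    simp only [real_inner_smul_right, inner_sub_right, real_inner_smul_left,
      inner_neg_left]
    rw [inner_rot_self (T0 x)]
    simp only [hc0f, hm0f]
    ring
  have hm1L : ∀ x ∈ I0, ∀ y ∈ I1, HasDerivAt (fun t => m1f t y)
      ((c0f x y * m1f x y + Sf x y) * (L x y)⁻¹) x := by
    intro x hx y hy
    have h := (hasDerivAt_const x (rot (T1 y))).inner ℝ (hUL x hx y hy)
    refine h.congr_deriv ?_
    symm
    simp only [inner_zero_left, add_zero, real_inner_smul_right, inner_sub_right]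
    have h2 : ⟪rot (T1 y), T0 x⟫ = -Sf x y := by
      rw [inner_rot_left]
      simp only [hSf]
      rw [real_inner_comm]
    rw [h2]
    simp only [hc0f, hm1f]
    ring
  have hSL : ∀ x ∈ I0, ∀ y ∈ I1, HasDerivAt (fun t => Sf t y) (-(κ0 x * Cf x y)) x := by
    intro x hx y hy
    have h := (hasDerivAt_rot (hT0d x hx)).inner ℝ (hasDerivAt_const x (T1 y))
    refine h.congr_deriv ?_
    symm
    rw [rotL.2, rot_rot]
    simp only [inner_zero_right, zero_add, real_inner_smul_left, inner_neg_left, hCf]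
    ring
  have hCL : ∀ x ∈ I0, ∀ y ∈ I1, HasDerivAt (fun t => Cf t y) (κ0 x * Sf x y) x := by
    intro x hx y hy
    have h := (hT0d x hx).inner ℝ (hasDerivAt_const x (T1 y))
    refine h.congr_deriv ?_
    symm
    simp only [inner_zero_right, zero_add, real_inner_smul_left, hSf]
  have hρ0d : ∀ x ∈ I0, HasDerivAt (fun s => (κ0 s)⁻¹) (R0 x) x := fun x hx =>
    ((hρ0.differentiableOn (by norm_num)).differentiableAt
      (isOpen_Ioo.mem_nhds hx)).hasDerivAt
  have hρ1d : ∀ y ∈ I1, HasDerivAt (fun s => (κ1 s)⁻¹) (R1 y) y := fun y hy =>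
    ((hρ1.differentiableOn (by norm_num)).differentiableAt
      (isOpen_Ioo.mem_nhds hy)).hasDerivAt
  -- pythagoras facts
  have hpy0 : ∀ x ∈ I0, ∀ y ∈ I1, c0f x y ^ 2 + m0f x y ^ 2 = 1 := by
    intro x hx y hy
    have := pythag (hT0unit x hx) (U x y)
    rw [hUunit x hx y hy] at this
    exact this
  have hpy1 : ∀ x ∈ I0, ∀ y ∈ I1, c1f x y ^ 2 + m1f x y ^ 2 = 1 := by
    intro x hx y hy
    have := pythag (hT1unit y hy) (U x y)
    rw [hUunit x hx y hy] at this
    exact this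
  have hpyS : ∀ x ∈ I0, ∀ y ∈ I1, Cf x y ^ 2 + Sf x y ^ 2 = 1 := by
    intro x hx y hy
    have := pythag (hT0unit x hx) (T1 y)
    rw [hT1unit y hy] at this
    exact this
  have hm0ne : ∀ x ∈ I0, ∀ y ∈ I1, m0f x y ≠ 0 := by
    intro x hx y hy h
    have h1 : |c0f x y| < 1 := hang0 x hx y hy
    have h2 := hpy0 x hx y hy
    rw [h] at h2
    have := abs_lt.1 h1
    nlinarith [this.1, this.2]
  have hm1ne : ∀ x ∈ I0, ∀ y ∈ I1, m1f x y ≠ 0 := by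
    intro x hx y hy h
    have h1 : |c1f x y| < 1 := hang1 x hx y hy
    have h2 := hpy1 x hx y hy
    rw [h] at h2
    have := abs_lt.1 h1
    nlinarith [this.1, this.2]
  -- constancy of signs on the connected product
  have hPconn : IsPreconnected ((I0 ×ˢ I1 : Set (ℝ × ℝ))) :=
    isPreconnected_Ioo.prod isPreconnected_Ioo
  have hwcont : ContinuousOn (fun p : ℝ × ℝ => γ1 p.2 - γ0 p.1) (I0 ×ˢ I1) :=
    (hγ1.continuousOn.comp continuous_snd.continuousOn (fun p hp => hp.2)).sub
      (hγ0.continuousOn.comp continuous_fst.continuousOn (fun p hp => hp.1))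
  have hUcont : ContinuousOn (fun p : ℝ × ℝ => U p.1 p.2) (I0 ×ˢ I1) := by
    apply ContinuousOn.fun_smul
    · exact (hwcont.norm.inv₀ (fun p hp => hLne p.1 hp.1 p.2 hp.2))
    · exact hwcont
  have hT0cont : ContinuousOn (fun p : ℝ × ℝ => T0 p.1) (I0 ×ˢ I1) :=
    hT0c2.continuousOn.comp continuous_fst.continuousOn (fun p hp => hp.1)
  have hT1cont : ContinuousOn (fun p : ℝ × ℝ => T1 p.2) (I0 ×ˢ I1) :=
    hT1c2.continuousOn.comp continuous_snd.continuousOn (fun p hp => hp.2)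
  have hm0cont : ContinuousOn (fun p : ℝ × ℝ => m0f p.1 p.2) (I0 ×ˢ I1) :=
    ContinuousOn.inner (rotCLM.continuous.comp_continuousOn hT0cont) hUcont
  have hm1cont : ContinuousOn (fun p : ℝ × ℝ => m1f p.1 p.2) (I0 ×ˢ I1) :=
    ContinuousOn.inner (rotCLM.continuous.comp_continuousOn hT1cont) hUcont
  obtain ⟨ε0, hε0pm, hε0⟩ : ∃ e : ℝ, (e = 1 ∨ e = -1) ∧
      ∀ x ∈ I0, ∀ y ∈ I1, |m0f x y| = e * m0f x y := by
    rcases sign_const hPconn hm0cont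
        (fun p hp => hm0ne p.1 hp.1 p.2 hp.2) with h | h
    · exact ⟨1, Or.inl rfl, fun x hx y hy => by
        rw [abs_of_pos (h (x, y) ⟨hx, hy⟩)]; ring⟩
    · exact ⟨-1, Or.inr rfl, fun x hx y hy => by
        rw [abs_of_neg (h (x, y) ⟨hx, hy⟩)]; ring⟩
  obtain ⟨ε1, hε1pm, hε1⟩ : ∃ e : ℝ, (e = 1 ∨ e = -1) ∧
      ∀ x ∈ I0, ∀ y ∈ I1, |m1f x y| = e * m1f x y := by
    rcases sign_const hPconn hm1cont
        (fun p hp => hm1ne p.1 hp.1 p.2 hp.2) with h | h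
    · exact ⟨1, Or.inl rfl, fun x hx y hy => by
        rw [abs_of_pos (h (x, y) ⟨hx, hy⟩)]; ring⟩
    · exact ⟨-1, Or.inr rfl, fun x hx y hy => by
        rw [abs_of_neg (h (x, y) ⟨hx, hy⟩)]; ring⟩
  have hsq0 : ∀ x ∈ I0, ∀ y ∈ I1,
      Real.sqrt (1 - c0f x y ^ 2) = ε0 * m0f x y := by
    intro x hx y hy
    have h2 := hpy0 x hx y hy
    rw [show (1 : ℝ) - c0f x y ^ 2 = m0f x y ^ 2 by linarith]
    rw [Real.sqrt_sq_eq_abs]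
    exact hε0 x hx y hy
  have hsq1 : ∀ x ∈ I0, ∀ y ∈ I1,
      Real.sqrt (1 - c1f x y ^ 2) = ε1 * m1f x y := by
    intro x hx y hy
    have h2 := hpy1 x hx y hy
    rw [show (1 : ℝ) - c1f x y ^ 2 = m1f x y ^ 2 by linarith]
    rw [Real.sqrt_sq_eq_abs]
    exact hε1 x hx y hy
  -- the identity, rewritten
  have hIeq : ∀ x ∈ I0, ∀ y ∈ I1,
      (κ0 x)⁻¹ * (ε0 * m0f x y) + (κ1 y)⁻¹ * (ε1 * m1f x y) = 2 * L x y := by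
    intro x hx y hy
    rw [← hsq0 x hx y hy, ← hsq1 x hx y hy]
    exact hiden x hx y hy
  -- first differentiated identity (in the x direction)
  have hII : ∀ x ∈ I0, ∀ y ∈ I1,
      ε0 * R0 x * m0f x y + (4 - ε0) * c0f x y
        + ε1 * (κ1 y)⁻¹ * (Sf x y * (L x y)⁻¹) = 0 := by
    intro x hx y hy
    have hF : HasDerivAt
        (fun t => (κ0 t)⁻¹ * (ε0 * m0f t y) + (κ1 y)⁻¹ * (ε1 * m1f t y))
        (R0 x * (ε0 * m0f x y)
          + (κ0 x)⁻¹ * (ε0 * (-(κ0 x * c0f x y) + c0f x y * m0f x y * (L x y)⁻¹))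
          + (κ1 y)⁻¹ * (ε1 * ((c0f x y * m1f x y + Sf x y) * (L x y)⁻¹))) x :=
      ((hρ0d x hx).mul ((hm0L x hx y hy).const_mul ε0)).add
        (((hm1L x hx y hy).const_mul ε1).const_mul ((κ1 y)⁻¹))
    have hG : HasDerivAt (fun t => 2 * L t y) (2 * -(c0f x y)) x :=
      (hLL x hx y hy).const_mul 2
    have heq := deriv_eq_on_Ioo hx (fun t ht => hIeq t ht y hy) hF hG
    have hk0 : (κ0 x)⁻¹ * κ0 x = 1 := inv_mul_cancel₀ (hκ0ne x hx)
    have hLu : (L x y)⁻¹ * L x y = 1 := inv_mul_cancel₀ (hLne x hx y hy)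
    have hIe := hIeq x hx y hy
    linear_combination heq + (ε0 * c0f x y) * hk0 - (c0f x y * (L x y)⁻¹) * hIe
      - (2 * c0f x y) * hLu
  -- second differentiated identity (in the y direction): the key separated relation
  have hIV : ∀ x ∈ I0, ∀ y ∈ I1,
      (ε0 * R0 x + ε1 * R1 y) * Sf x y + (4 - ε0 + ε1) * Cf x y = 0 := by
    intro x hx y hy
    have hinner : HasDerivAt (fun t => Sf x t * (L x t)⁻¹)
        (κ1 y * Cf x y * (L x y)⁻¹ + Sf x y * (-(c1f x y) / L x y ^ 2)) y :=
      (hSR x hx y hy).mul ((hLR x hx y hy).inv (hLne x hx y hy))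
    have hinner' : HasDerivAt (fun t => Sf x t * (L x t)⁻¹)
        (κ1 y * Cf x y * (L x y)⁻¹
          - Sf x y * c1f x y * ((L x y)⁻¹ * (L x y)⁻¹)) y := by
      convert hinner using 1
      have h2 : (L x y ^ 2)⁻¹ = (L x y)⁻¹ * (L x y)⁻¹ := by rw [sq, mul_inv]
      rw [div_eq_mul_inv, h2]
      ring
    have hF : HasDerivAt
        (fun t => ε0 * R0 x * m0f x t + (4 - ε0) * c0f x t
          + ε1 * (κ1 t)⁻¹ * (Sf x t * (L x t)⁻¹))
        ((ε0 * R0 x) * ((Sf x y - c1f x y * m0f x y) * (L x y)⁻¹)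
          + (4 - ε0) * ((Cf x y - c1f x y * c0f x y) * (L x y)⁻¹)
          + ((ε1 * R1 y) * (Sf x y * (L x y)⁻¹)
            + (ε1 * (κ1 y)⁻¹) * (κ1 y * Cf x y * (L x y)⁻¹
              - Sf x y * c1f x y * ((L x y)⁻¹ * (L x y)⁻¹)))) y :=
      (((hm0R x hx y hy).const_mul (ε0 * R0 x)).add
        ((hc0R x hx y hy).const_mul (4 - ε0))).add
        ((((hρ1d y hy).const_mul ε1).mul hinner'))
    have heq2 := deriv_eq_on_Ioo hy (fun t ht => hII x hx t ht) hF
      (hasDerivAt_const y (0:ℝ))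
    have hk1 : (κ1 y)⁻¹ * κ1 y = 1 := inv_mul_cancel₀ (hκ1ne y hy)
    have hLu : (L x y)⁻¹ * L x y = 1 := inv_mul_cancel₀ (hLne x hx y hy)
    have hII' := hII x hx y hy
    linear_combination (L x y) * heq2 + (c1f x y) * hII' - (ε1 * Cf x y) * hk1
      - (ε0 * R0 x * (Sf x y - c1f x y * m0f x y)
        + (4 - ε0) * (Cf x y - c1f x y * c0f x y) + ε1 * R1 y * Sf x y
        + ε1 * (κ1 y)⁻¹ * κ1 y * Cf x y
        - ε1 * (κ1 y)⁻¹ * Sf x y * c1f x y * (L x y)⁻¹) * hLu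
  -- K is nonzero
  have hK : (4 : ℝ) - ε0 + ε1 ≠ 0 := by
    rcases hε0pm with rfl | rfl <;> rcases hε1pm with rfl | rfl <;> norm_num
  -- S never vanishes
  have hSne : ∀ x ∈ I0, ∀ y ∈ I1, Sf x y ≠ 0 := by
    intro x hx y hy h
    have h4 := hIV x hx y hy
    rw [h] at h4
    have hC : Cf x y = 0 := by
      have : ((4 : ℝ) - ε0 + ε1) * Cf x y = 0 := by linarith [h4]
      exact (mul_eq_zero.1 this).resolve_left hK
    have h5 := hpyS x hx y hy
    rw [h, hC] at h5
    norm_num at h5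
  -- S² is independent of the first variable
  have hS2 : ∀ x ∈ I0, ∀ x' ∈ I0, ∀ y ∈ I1, Sf x y ^ 2 = Sf x' y ^ 2 := by
    intro x hx x' hx' y hy
    have hGd : HasDerivAt
        (fun t => Cf x t / Sf x t - Cf x' t / Sf x' t)
        (((-(κ1 y * Sf x y)) * Sf x y - Cf x y * (κ1 y * Cf x y)) / Sf x y ^ 2
          - ((-(κ1 y * Sf x' y)) * Sf x' y - Cf x' y * (κ1 y * Cf x' y)) / Sf x' y ^ 2) y :=
      ((hCR x hx y hy).div (hSR x hx y hy) (hSne x hx y hy)).sub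
        ((hCR x' hx' y hy).div (hSR x' hx' y hy) (hSne x' hx' y hy))
    have hGconst : ∀ t ∈ I1, Cf x t / Sf x t - Cf x' t / Sf x' t
        = (ε0 * R0 x' - ε0 * R0 x) / (4 - ε0 + ε1) := by
      intro t ht
      have h4 := hIV x hx t ht
      have h4' := hIV x' hx' t ht
      have hs := hSne x hx t ht
      have hs' := hSne x' hx' t ht
      rw [div_sub_div _ _ hs hs', div_eq_div_iff (mul_ne_zero hs hs') hK]
      linear_combination (Sf x' t) * h4 - (Sf x t) * h4'
    have hE := deriv_eq_on_Ioo hy hGconst hGd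
      (hasDerivAt_const y ((ε0 * R0 x' - ε0 * R0 x) / (4 - ε0 + ε1)))
    have e1 : (-(κ1 y * Sf x y)) * Sf x y - Cf x y * (κ1 y * Cf x y) = -κ1 y := by
      linear_combination (-(κ1 y)) * hpyS x hx y hy
    have e1' : (-(κ1 y * Sf x' y)) * Sf x' y - Cf x' y * (κ1 y * Cf x' y) = -κ1 y := by
      linear_combination (-(κ1 y)) * hpyS x' hx' y hy
    rw [e1, e1'] at hE
    have hs : Sf x y ≠ 0 := hSne x hx y hy
    have hs' : Sf x' y ≠ 0 := hSne x' hx' y hy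
    have hk : κ1 y ≠ 0 := hκ1ne y hy
    have h8 : (-κ1 y) / Sf x y ^ 2 = (-κ1 y) / Sf x' y ^ 2 := by linarith [hE]
    have h9 := (div_eq_div_iff (pow_ne_zero 2 hs) (pow_ne_zero 2 hs')).1 h8
    have h10 := mul_left_cancel₀ (neg_ne_zero.2 hk) h9
    linarith [h10]
  -- hence C vanishes identically
  have hCzero : ∀ x ∈ I0, ∀ y ∈ I1, Cf x y = 0 := by
    intro x hx y hy
    have hF : HasDerivAt (fun t => Sf t y * Sf t y)
        (-(κ0 x * Cf x y) * Sf x y + Sf x y * -(κ0 x * Cf x y)) x :=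
      (hSL x hx y hy).mul (hSL x hx y hy)
    have hE := deriv_eq_on_Ioo hx
      (fun t ht => by
        have h := hS2 t ht x hx y hy
        linear_combination h)
      hF (hasDerivAt_const x (Sf x y * Sf x y))
    have h6 : κ0 x * (Sf x y * Cf x y) = 0 := by linear_combination (-(1:ℝ)/2) * hE
    have h7 := (mul_eq_zero.1 h6).resolve_left (hκ0ne x hx)
    exact (mul_eq_zero.1 h7).resolve_left (hSne x hx y hy)
  -- and finally S must vanish too: contradiction
  have hx0 : (a0 + b0) / 2 ∈ I0 := ⟨by linarith, by linarith⟩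
  have hy0 : (a1 + b1) / 2 ∈ I1 := ⟨by linarith, by linarith⟩
  set x := (a0 + b0) / 2
  set y := (a1 + b1) / 2
  have hF : HasDerivAt (fun t => Cf t y) (κ0 x * Sf x y) x := hCL x hx0 y hy0
  have hE := deriv_eq_on_Ioo hx0 (fun t ht => hCzero t ht y hy0) hF
    (hasDerivAt_const x (0:ℝ))
  have h7 := (mul_eq_zero.1 hE).resolve_left (hκ0ne x hx0)
  exact hSne x hx0 y hy0 h7
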